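/- A path P between vertices u and v of a partial cube G is a shortest path if and only if all edges of P belong to pairwise distinct Θ-classes of G. -/

import Mathlib

open Finset
open scoped Classical

variable {U : Type*}

/-- Hamming distance between two vertices of the hypercube `U → Bool`. -/
def hDist [Fintype U] [DecidableEq U] (x y : U → Bool) : ℕ :=
  (Finset.univ.filter fun i => x i ≠ y i).card

/-- The hypercube graph on `U → Bool`: two vertices are adjacent iff they differ
in exactly one coordinate. -/
def cubeGraph (U : Type*) [Fintype U] [DecidableEq U] : SimpleGraph (U → Bool) where
  Adj x y := hDist x y = 1
  symm := by
    constructor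
    intro x y h
    have hs : (Finset.univ.filter fun i => y i ≠ x i) =
        (Finset.univ.filter fun i => x i ≠ y i) := by
      apply Finset.filter_congr
      intro i _
      exact ne_comm
    simpa [hDist, hs] using h
  loopless := by
    constructor
    intro x h
    simp [hDist] at h

/-- Distance between `x` and `y` inside the subgraph of the hypercube induced by `A`
(`0` if one of them is not in `A`). -/
noncomputable def dIn [Fintype U] [DecidableEq U] (A : Set (U → Bool)) (x y : U → Bool) : ℕ :=
  if h : x ∈ A ∧ y ∈ A then ((cubeGraph U).induce A).dist ⟨x, h.1⟩ ⟨y, h.2⟩ else 0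

/-- A set of vertices of the hypercube is a partial cube if its induced graph is connected
and the induced graph distance coincides with the Hamming distance
(i.e. it is an isometric subgraph of the hypercube). -/
def IsPartialCube [Fintype U] [DecidableEq U] (A : Set (U → Bool)) : Prop :=
  ((cubeGraph U).induce A).Connected ∧ ∀ x ∈ A, ∀ y ∈ A, dIn A x y = hDist x y

/-- `A` shatters the coordinate set `X`. -/
def Shatters [Fintype U] [DecidableEq U] (A : Set (U → Bool)) (X : Finset U) : Prop :=
  ∀ g : U → Bool, ∃ a ∈ A, ∀ i ∈ X, a i = g i

/-- `A` strongly shatters `X`: it contains a full subcube over the coordinates `X`. -/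
def StronglyShatters [Fintype U] [DecidableEq U] (A : Set (U → Bool)) (X : Finset U) : Prop :=
  ∃ a : U → Bool, ∀ g : U → Bool, (fun i => if i ∈ X then g i else a i) ∈ A

/-- An ample set family: every shattered set is strongly shattered. -/
def IsAmple [Fintype U] [DecidableEq U] (A : Set (U → Bool)) : Prop :=
  ∀ X : Finset U, Shatters A X → StronglyShatters A X

/-- The set of coordinates in which the two endpoints of an edge of the hypercube differ;
for edges of a partial cube this determines the Θ-class of the edge. -/
def diffCoords [DecidableEq U] : Sym2 (U → Bool) → Set U :=
  Sym2.lift ⟨fun x y => {i | x i ≠ y i}, fun x y => by ext i; exact ne_comm⟩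

section Aux

variable [Fintype U] [DecidableEq U]

/-- The finset of coordinates where `x` and `y` differ. -/
def dset (x y : U → Bool) : Finset U := Finset.univ.filter fun i => x i ≠ y i

lemma hDist_eq (x y : U → Bool) : hDist x y = (dset x y).card := rfl

lemma mem_dset {x y : U → Bool} {i : U} : i ∈ dset x y ↔ x i ≠ y i := by
  simp [dset]

lemma dset_comm (x y : U → Bool) : dset x y = dset y x := by
  ext i; simp only [mem_dset]; exact ne_comm

lemma dset_triangle (x y z : U → Bool) : dset x z ⊆ dset x y ∪ dset y z := by
  intro i hi
  rw [mem_dset] at hi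
  simp only [Finset.mem_union, mem_dset]
  by_contra hc
  push_neg at hc
  exact hi (hc.1.trans hc.2)

lemma hDist_triangle (x y z : U → Bool) : hDist x z ≤ hDist x y + hDist y z := by
  rw [hDist_eq, hDist_eq, hDist_eq]
  exact le_trans (Finset.card_le_card (dset_triangle x y z)) (Finset.card_union_le _ _)

/-- Finset version of `diffCoords` on edges of the induced subgraph. -/
def Fd (S : Set (U → Bool)) : Sym2 ↥S → Finset U :=
  Sym2.lift ⟨fun a c => dset a.1 c.1, fun a c => dset_comm _ _⟩

lemma diffCoords_eq (S : Set (U → Bool)) (e : Sym2 ↥S) :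
    diffCoords (e.map (Subtype.val : ↥S → U → Bool)) = ↑(Fd S e) := by
  induction e using Sym2.ind with
  | _ a c =>
    ext i
    simp [diffCoords, Fd, dset]

lemma adj_dset {S : Set (U → Bool)} {a c : ↥S} (h : ((cubeGraph U).induce S).Adj a c) :
    ∃ i, dset a.1 c.1 = {i} := by
  have h1 : hDist a.1 c.1 = 1 := h
  rw [hDist_eq] at h1
  exact Finset.card_eq_one.mp h1

lemma edge_singleton {S : Set (U → Bool)} {a b : ↥S} {q : ((cubeGraph U).induce S).Walk a b}
    {e : Sym2 ↥S} (he : e ∈ q.edges) : ∃ i, Fd S e = {i} := by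
  have hE := q.edges_subset_edgeSet he
  induction e using Sym2.ind with
  | _ x y =>
    rw [SimpleGraph.mem_edgeSet] at hE
    simpa [Fd] using adj_dset hE

lemma mem_foldr_union {l : List (Finset U)} {i : U} :
    i ∈ l.foldr (· ∪ ·) ∅ ↔ ∃ s ∈ l, i ∈ s := by
  induction l with
  | nil => simp
  | cons a l ih => simp [ih]

lemma dset_insert {a c b : U → Bool} {i : U} (hac : dset a c = {i}) (hic : i ∉ dset c b) :
    dset a b = insert i (dset c b) := by
  have hmem : ∀ j, a j ≠ c j ↔ j = i := by
    intro j
    rw [← mem_dset, hac, Finset.mem_singleton]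
  rw [mem_dset] at hic
  push_neg at hic
  ext j
  simp only [mem_dset, Finset.mem_insert]
  by_cases hj : j = i
  · subst hj
    have h1 : a j ≠ c j := (hmem j).mpr rfl
    simp only [eq_self_iff_true, true_or, iff_true]
    rw [← hic]; exact h1
  · have h1 : a j = c j := by
      by_contra hne
      exact hj ((hmem j).mp hne)
    rw [h1]
    simp [hj]

lemma lenA {S : Set (U → Bool)} {a b : ↥S} (q : ((cubeGraph U).induce S).Walk a b) :
    hDist a.1 b.1 ≤ q.length := by
  induction q with
  | nil => simp [hDist_eq, dset]
  | @cons a c b h q ih =>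
    have h1 : hDist a.1 c.1 = 1 := h
    calc hDist a.1 b.1 ≤ hDist a.1 c.1 + hDist c.1 b.1 := hDist_triangle _ _ _
      _ ≤ 1 + q.length := by rw [h1]; omega
      _ = (SimpleGraph.Walk.cons h q).length := by rw [SimpleGraph.Walk.length_cons]; omega

lemma main_pw {S : Set (U → Bool)} {a b : ↥S} (q : ((cubeGraph U).induce S).Walk a b)
    (hpw : (q.edges.map (Fd S)).Pairwise (· ≠ ·)) :
    hDist a.1 b.1 = q.length ∧ (∀ s ∈ q.edges.map (Fd S), s ⊆ dset a.1 b.1) ∧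
      dset a.1 b.1 ⊆ (q.edges.map (Fd S)).foldr (· ∪ ·) ∅ := by
  induction q with
  | nil => simp [hDist_eq, dset]
  | @cons a c b h q ih =>
    rw [SimpleGraph.Walk.edges_cons, List.map_cons] at hpw ⊢
    rw [List.pairwise_cons] at hpw
    obtain ⟨hhead, htail⟩ := hpw
    obtain ⟨hcb, hsub, hfold⟩ := ih htail
    obtain ⟨i, hi⟩ := adj_dset h
    have hFd : Fd S s(a, c) = dset a.1 c.1 := by simp [Fd]
    have hic : i ∉ dset c.1 b.1 := by
      intro him
      obtain ⟨s', hs', his'⟩ := mem_foldr_union.mp (hfold him)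
      obtain ⟨e, he, rfl⟩ := List.mem_map.mp hs'
      obtain ⟨j, hj⟩ := edge_singleton he
      rw [hj, Finset.mem_singleton] at his'
      exact hhead _ hs' (by rw [hFd, hi, hj, his'])
    have hins : dset a.1 b.1 = insert i (dset c.1 b.1) := dset_insert hi hic
    refine ⟨?_, ?_, ?_⟩
    · rw [hDist_eq, hins, Finset.card_insert_of_notMem hic, SimpleGraph.Walk.length_cons,
        ← hDist_eq, hcb]
    · intro s hs
      rw [List.mem_cons] at hs
      rcases hs with rfl | hs
      · rw [hFd, hi, hins]
        intro j hj
        rw [Finset.mem_singleton] at hj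
        subst hj
        exact Finset.mem_insert_self _ _
      · exact (hsub s hs).trans (by rw [hins]; exact Finset.subset_insert _ _)
    · rw [List.foldr_cons, hins]
      apply Finset.insert_subset
      · apply Finset.mem_union_left
        rw [hFd, hi]
        exact Finset.mem_singleton_self _
      · exact hfold.trans (Finset.subset_union_right)

lemma main_len {S : Set (U → Bool)} {a b : ↥S} (q : ((cubeGraph U).induce S).Walk a b)
    (hlen : hDist a.1 b.1 = q.length) :
    (q.edges.map (Fd S)).Pairwise (· ≠ ·) ∧ ∀ s ∈ q.edges.map (Fd S), s ⊆ dset a.1 b.1 := by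
  induction q with
  | nil => simp
  | @cons a c b h q ih =>
    rw [SimpleGraph.Walk.length_cons] at hlen
    have h1 : hDist a.1 c.1 = 1 := h
    have ht : hDist a.1 b.1 ≤ 1 + hDist c.1 b.1 := by
      calc hDist a.1 b.1 ≤ hDist a.1 c.1 + hDist c.1 b.1 := hDist_triangle _ _ _
        _ = 1 + hDist c.1 b.1 := by rw [h1]
    have hA := lenA q
    have hcb : hDist c.1 b.1 = q.length := by omega
    obtain ⟨htail, hsub⟩ := ih hcb
    obtain ⟨i, hi⟩ := adj_dset h
    have hFd : Fd S s(a, c) = dset a.1 c.1 := by simp [Fd]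
    have hic : i ∉ dset c.1 b.1 := by
      intro him
      have hsub2 : dset a.1 b.1 ⊆ dset c.1 b.1 := by
        intro j hj
        rcases Finset.mem_union.mp (dset_triangle a.1 c.1 b.1 hj) with hj1 | hj1
        · rw [hi, Finset.mem_singleton] at hj1
          rwa [hj1]
        · exact hj1
      have := Finset.card_le_card hsub2
      rw [← hDist_eq, ← hDist_eq, hlen, hcb] at this
      omega
    have hins : dset a.1 b.1 = insert i (dset c.1 b.1) := dset_insert hi hic
    rw [SimpleGraph.Walk.edges_cons, List.map_cons]
    constructor
    · rw [List.pairwise_cons]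
      refine ⟨?_, htail⟩
      intro s' hs' heq
      apply hic
      have : i ∈ s' := by
        rw [← heq, hFd, hi]; exact Finset.mem_singleton_self _
      exact hsub s' hs' this
    · intro s hs
      rw [List.mem_cons] at hs
      rcases hs with rfl | hs
      · rw [hFd, hi, hins]
        intro j hj
        rw [Finset.mem_singleton] at hj
        subst hj
        exact Finset.mem_insert_self _ _
      · exact (hsub s hs).trans (by rw [hins]; exact Finset.subset_insert _ _)

end Aux

/-- A `(u,v)`-path `P` of a partial cube is a shortest path if and only if
all its edges belong to pairwise distinct Θ-classes. -/
theorem stmt1 [Fintype U] [DecidableEq U] (S : Set (U → Bool)) (hpc : IsPartialCube S)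
    (u v : ↥S) (p : ((cubeGraph U).induce S).Walk u v) (hp : p.IsPath) :
    p.length = ((cubeGraph U).induce S).dist u v ↔
      (p.edges.map fun e => diffCoords (e.map (Subtype.val : ↥S → U → Bool))).Pairwise (· ≠ ·) := by

  have hd : ((cubeGraph U).induce S).dist u v = hDist u.1 v.1 := by
    have h2 := hpc.2 u.1 u.2 v.1 v.2
    rw [dIn, dif_pos ⟨u.2, v.2⟩] at h2
    simpa using h2
  constructor
  · intro hlen
    have h1 : hDist u.1 v.1 = p.length := by rw [hlen, hd]
    have h2 := (main_len p h1).1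
    rw [List.pairwise_map] at h2 ⊢
    refine h2.imp ?_
    intro e e' hne heq
    apply hne
    rw [diffCoords_eq, diffCoords_eq] at heq
    exact_mod_cast heq
  · intro hpw
    rw [List.pairwise_map] at hpw
    have h2 : (p.edges.map (Fd S)).Pairwise (· ≠ ·) := by
      rw [List.pairwise_map]
      refine hpw.imp ?_
      intro e e' hne heq
      exact hne (by rw [diffCoords_eq, diffCoords_eq, heq])
    have h1 := (main_pw p h2).1
    rw [hd, ← h1]
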